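/- There exist a constant c > 0 and a threshold n₀ such that for all n ≥ n₀, the number C_n of isomorphism classes of circle graphs on n vertices satisfies log₂ C_n ≥ n·log₂ n − c·n. -/

import Mathlib

/-- The setoid on graphs on `Fin n` satisfying a property `P`, identifying isomorphic graphs. -/
def graphIsoSetoid (n : ℕ) (P : SimpleGraph (Fin n) → Prop) :
    Setoid {G : SimpleGraph (Fin n) // P G} where
  r G H := Nonempty (G.val ≃g H.val)
  iseqv := ⟨fun _ => ⟨SimpleGraph.Iso.refl⟩, fun ⟨e⟩ => ⟨e.symm⟩,
    fun ⟨e⟩ ⟨f⟩ => ⟨e.trans f⟩⟩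

/-- The number of isomorphism classes of graphs on `Fin n` satisfying `P`. -/
noncomputable def numIsoClasses (n : ℕ) (P : SimpleGraph (Fin n) → Prop) : ℕ :=
  Nat.card (Quotient (graphIsoSetoid n P))

/-- `G` is a circle graph: the vertices correspond to `n` chords of a circle, given by `2n`
pairwise distinct endpoints on the circle (positions in `Fin (2n)`), with `u` adjacent to `v`
iff the corresponding intervals overlap (i.e. the chords interleave). -/
def IsCircleGraph {n : ℕ} (G : SimpleGraph (Fin n)) : Prop :=
  ∃ s e : Fin n → Fin (2 * n),
    (∀ v, s v < e v) ∧
    Function.Injective (Sum.elim s e) ∧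
    ∀ u v : Fin n, u ≠ v →
      (G.Adj u v ↔
        (s u < s v ∧ s v < e u ∧ e u < e v) ∨ (s v < s u ∧ s u < e v ∧ e v < e u))


namespace CGaux

lemma blk_le {a b W : ℕ} (H : a ≤ b) : a*W ≤ b*W := Nat.mul_le_mul_right W H
lemma blk_lt {a b W : ℕ} (H : a < b) : a*W + W ≤ b*W := by
  calc a*W + W = (a+1)*W := by ring
  _ ≤ b*W := Nat.mul_le_mul_right W H
lemma blk_inj {a a' o o' W : ℕ} (ho : o < W) (ho' : o' < W) (H : a*W + o = a'*W + o') :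
    a = a' ∧ o = o' := by
  rcases lt_trichotomy a a' with H1 | H1 | H1
  · have := blk_lt (W := W) H1; omega
  · subst H1; omega
  · have := blk_lt (W := W) H1; omega

lemma cmp_blk3 (a b W : ℕ) :
    (a < b ∧ a*W + W ≤ b*W) ∨ (a = b ∧ a*W = b*W) ∨ (b < a ∧ b*W + W ≤ a*W) := by
  rcases lt_trichotomy a b with H | H | H
  · exact Or.inl ⟨H, blk_lt H⟩
  · exact Or.inr (Or.inl ⟨H, by rw [H]⟩)
  · exact Or.inr (Or.inr ⟨H, blk_lt H⟩)

lemma cmp_blk (a b W : ℕ) : (a ≤ b ∧ a*W ≤ b*W) ∨ (b < a ∧ b*W + W ≤ a*W) := by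
  rcases le_or_gt a b with H | H
  · exact Or.inl ⟨H, blk_le H⟩
  · exact Or.inr ⟨H, blk_lt H⟩

inductive Vx (h r : ℕ) where
  | dat (u v : Fin h)
  | spL (k : Fin h)
  | spR (k : Fin h)
  | pL (k : Fin h)
  | pR (k : Fin h) (b : Bool)
  | isl (t : Fin r)
deriving DecidableEq


def vxEquiv (h r : ℕ) : Vx h r ≃ ((Fin h × Fin h) ⊕ (Fin h ⊕ (Fin h ⊕ (Fin h ⊕ ((Fin h × Bool) ⊕ Fin r))))) where
  toFun x := match x with
    | .dat u v => Sum.inl (u, v)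
    | .spL k => Sum.inr (Sum.inl k)
    | .spR k => Sum.inr (Sum.inr (Sum.inl k))
    | .pL k => Sum.inr (Sum.inr (Sum.inr (Sum.inl k)))
    | .pR k b => Sum.inr (Sum.inr (Sum.inr (Sum.inr (Sum.inl (k, b)))))
    | .isl t => Sum.inr (Sum.inr (Sum.inr (Sum.inr (Sum.inr t))))
  invFun x := match x with
    | Sum.inl (u, v) => .dat u v
    | Sum.inr (Sum.inl k) => .spL k
    | Sum.inr (Sum.inr (Sum.inl k)) => .spR k
    | Sum.inr (Sum.inr (Sum.inr (Sum.inl k))) => .pL k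
    | Sum.inr (Sum.inr (Sum.inr (Sum.inr (Sum.inl (k, b))))) => .pR k b
    | Sum.inr (Sum.inr (Sum.inr (Sum.inr (Sum.inr t)))) => .isl t
  left_inv x := by cases x <;> rfl
  right_inv x := by rcases x with ⟨u, v⟩ | (k | (k | (k | (⟨k, b⟩ | t)))) <;> rfl

instance instFintypeVx {h r : ℕ} : Fintype (Vx h r) := Fintype.ofEquiv _ (vxEquiv h r).symm

lemma card_vx (h r : ℕ) : Fintype.card (Vx h r) = h*h + 5*h + r := by
  rw [Fintype.card_congr (vxEquiv h r)]
  simp only [Fintype.card_sum, Fintype.card_prod, Fintype.card_fin, Fintype.card_bool]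
  ring

variable {h r : ℕ}


/-- left endpoint -/
def sV (pe : Fin h → Equiv.Perm (Fin h)) : Vx h r → ℕ
  | .dat u v => (u:ℕ)*(h+1) + (1 + (pe u v : ℕ))
  | .spL k => (k:ℕ)*(h+1)
  | .spR k => h*h+4*h + (k:ℕ)*(h+1)
  | .pL k => h*h+h + 3*(h-1-(k:ℕ))
  | .pR k b => 2*(h*h)+5*h + 5*(h-1-(k:ℕ)) + (cond b 1 0)
  | .isl t => 2*(h*h)+10*h + 2*(t:ℕ)

/-- right endpoint -/
def eV (qe : Fin h → Equiv.Perm (Fin h)) : Vx h r → ℕ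
  | .dat u v => h*h+4*h + (v:ℕ)*(h+1) + (1 + (qe v u : ℕ))
  | .spL k => h*h+h + 3*(h-1-(k:ℕ)) + 1
  | .spR k => 2*(h*h)+5*h + 5*(h-1-(k:ℕ)) + 2
  | .pL k => h*h+h + 3*(h-1-(k:ℕ)) + 2
  | .pR k b => 2*(h*h)+5*h + 5*(h-1-(k:ℕ)) + (cond b 3 4)
  | .isl t => 2*(h*h)+10*h + 2*(t:ℕ) + 1

variable (pe qe : Fin h → Equiv.Perm (Fin h))

def ovl (x y : Vx h r) : Prop :=
  (sV pe x < sV pe y ∧ sV pe y < eV qe x ∧ eV qe x < eV qe y) ∨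
  (sV pe y < sV pe x ∧ sV pe x < eV qe y ∧ eV qe y < eV qe x)

instance : ∀ x y : Vx h r, Decidable (ovl pe qe x y) := fun _ _ => by
  unfold ovl; infer_instance

def G : SimpleGraph (Vx h r) where
  Adj x y := x ≠ y ∧ ovl pe qe x y
  symm := ⟨by
    rintro x y ⟨hne, H | H⟩
    · exact ⟨hne.symm, Or.inr H⟩
    · exact ⟨hne.symm, Or.inl H⟩⟩
  loopless := ⟨fun x H => H.1 rfl⟩

instance instDecAdj {h r : ℕ} {pe qe : Fin h → Equiv.Perm (Fin h)} :
    DecidableRel (G pe qe (h := h) (r := r)).Adj := fun _ _ =>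
  inferInstanceAs (Decidable (_ ∧ _))

lemma adj_iff {x y : Vx h r} : (G pe qe).Adj x y ↔ x ≠ y ∧ ovl pe qe x y := Iff.rfl

lemma blk_div {W a o : ℕ} (hW : 0 < W) (ho : o < W) :
    (a*W + o)/W = a ∧ (a*W + o) % W = o := by
  constructor
  · rw [Nat.add_comm, Nat.mul_comm, Nat.add_mul_div_left _ _ hW, Nat.div_eq_of_lt ho,
      Nat.zero_add]
  · rw [Nat.add_comm, Nat.mul_comm, Nat.add_mul_mod_self_left, Nat.mod_eq_of_lt ho]

lemma fin_blk (u : Fin h) : (u:ℕ)*(h+1) + (h+1) ≤ h*h + h := by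
  have := blk_lt (W := h+1) u.isLt
  have e : h*(h+1) = h*h + h := by ring
  omega

/-- decoder: left inverse of `Sum.elim (sV pe) (eV qe)` -/
def dec (m : ℕ) : Option (Vx h r ⊕ Vx h r) :=
  if m < h*h+h then
    if ha : m/(h+1) < h then
      if m % (h+1) = 0 then some (.inl (.spL ⟨m/(h+1), ha⟩))
      else if ho : m % (h+1) - 1 < h then
        some (.inl (.dat ⟨m/(h+1), ha⟩ ((pe ⟨m/(h+1), ha⟩).symm ⟨m % (h+1) - 1, ho⟩)))
      else none
    else none
  else if m < h*h+4*h then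
    have m' := m - (h*h+h)
    if ha : h-1-((m - (h*h+h))/3) < h then
      if (m - (h*h+h)) % 3 = 0 then some (.inl (.pL ⟨h-1-((m - (h*h+h))/3), ha⟩))
      else if (m - (h*h+h)) % 3 = 1 then some (.inr (.spL ⟨h-1-((m - (h*h+h))/3), ha⟩))
      else some (.inr (.pL ⟨h-1-((m - (h*h+h))/3), ha⟩))
    else none
  else if m < 2*(h*h)+5*h then
    if ha : (m - (h*h+4*h))/(h+1) < h then
      if (m - (h*h+4*h)) % (h+1) = 0 then some (.inl (.spR ⟨(m - (h*h+4*h))/(h+1), ha⟩))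
      else if ho : (m - (h*h+4*h)) % (h+1) - 1 < h then
        some (.inr (.dat ((qe ⟨(m - (h*h+4*h))/(h+1), ha⟩).symm ⟨(m - (h*h+4*h)) % (h+1) - 1, ho⟩)
          ⟨(m - (h*h+4*h))/(h+1), ha⟩))
      else none
    else none
  else if m < 2*(h*h)+10*h then
    if ha : h-1-((m - (2*(h*h)+5*h))/5) < h then
      if (m - (2*(h*h)+5*h)) % 5 = 0 then some (.inl (.pR ⟨h-1-((m - (2*(h*h)+5*h))/5), ha⟩ false))
      else if (m - (2*(h*h)+5*h)) % 5 = 1 then some (.inl (.pR ⟨h-1-((m - (2*(h*h)+5*h))/5), ha⟩ true))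
      else if (m - (2*(h*h)+5*h)) % 5 = 2 then some (.inr (.spR ⟨h-1-((m - (2*(h*h)+5*h))/5), ha⟩))
      else if (m - (2*(h*h)+5*h)) % 5 = 3 then some (.inr (.pR ⟨h-1-((m - (2*(h*h)+5*h))/5), ha⟩ true))
      else some (.inr (.pR ⟨h-1-((m - (2*(h*h)+5*h))/5), ha⟩ false))
    else none
  else
    if ht : (m - (2*(h*h)+10*h))/2 < r then
      if (m - (2*(h*h)+10*h)) % 2 = 0 then some (.inl (.isl ⟨(m - (2*(h*h)+10*h))/2, ht⟩))
      else some (.inr (.isl ⟨(m - (2*(h*h)+10*h))/2, ht⟩))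
    else none



theorem dec_code : ∀ x : Vx h r ⊕ Vx h r,
    dec (h := h) (r := r) pe qe (Sum.elim (sV pe) (eV qe) x) = some x := by
  rintro (x | x) <;> cases x
  case inl.dat u v =>
    have hb := fin_blk u
    have hp : (pe u v : ℕ) < h := (pe u v).isLt
    have hu : (u:ℕ) < h := u.isLt
    have hmv : Sum.elim (sV (r := r) pe) (eV (r := r) qe) (Sum.inl (Vx.dat u v))
        = (u:ℕ)*(h+1) + (1 + (pe u v : ℕ)) := rfl
    have hdm := blk_div (a := (u:ℕ)) (o := 1 + (pe u v : ℕ)) (W := h+1) (by omega) (by omega)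
    have hv1 : ((u:ℕ)*(h+1) + (1 + (pe u v : ℕ))) % (h+1) - 1 = (pe u v : ℕ) := by
      rw [hdm.2]; omega
    have hk : ∀ pf, (⟨((u:ℕ)*(h+1) + (1 + (pe u v : ℕ)))/(h+1), pf⟩ : Fin h) = u :=
      fun _ => Fin.ext hdm.1
    have ho : ∀ pf, (⟨((u:ℕ)*(h+1) + (1 + (pe u v : ℕ))) % (h+1) - 1, pf⟩ : Fin h) = pe u v :=
      fun _ => Fin.ext hv1
    unfold dec
    rw [hmv, if_pos (by omega), dif_pos (by rw [hdm.1]; exact hu),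
      if_neg (by rw [hdm.2]; omega), dif_pos (by rw [hdm.2]; omega), hk, ho,
      Equiv.symm_apply_apply]
  case inl.spL k =>
    have hb := fin_blk k
    have hu : (k:ℕ) < h := k.isLt
    have hmv : Sum.elim (sV (r := r) pe) (eV (r := r) qe) (Sum.inl (Vx.spL k)) = (k:ℕ)*(h+1) + 0 := rfl
    have hdm := blk_div (a := (k:ℕ)) (o := 0) (W := h+1) (by omega) (by omega)
    have hk : ∀ pf, (⟨((k:ℕ)*(h+1) + 0)/(h+1), pf⟩ : Fin h) = k := fun _ => Fin.ext hdm.1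
    unfold dec
    rw [hmv, if_pos (by omega), dif_pos (by rw [hdm.1]; exact hu),
      if_pos (by rw [hdm.2]), hk]
  case inl.spR k =>
    have hb := fin_blk k
    have hu : (k:ℕ) < h := k.isLt
    have hmv : Sum.elim (sV (r := r) pe) (eV (r := r) qe) (Sum.inl (Vx.spR k))
        = h*h+4*h + ((k:ℕ)*(h+1) + 0) := rfl
    have hdm := blk_div (a := (k:ℕ)) (o := 0) (W := h+1) (by omega) (by omega)
    have hsub : h*h+4*h + ((k:ℕ)*(h+1) + 0) - (h*h+4*h) = (k:ℕ)*(h+1) + 0 := by omega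
    have hv1 : (h*h+4*h + ((k:ℕ)*(h+1) + 0) - (h*h+4*h))/(h+1) = (k:ℕ) := by
      rw [hsub, hdm.1]
    have hv2 : (h*h+4*h + ((k:ℕ)*(h+1) + 0) - (h*h+4*h)) % (h+1) = 0 := by
      rw [hsub, hdm.2]
    have hk : ∀ pf, (⟨(h*h+4*h + ((k:ℕ)*(h+1) + 0) - (h*h+4*h))/(h+1), pf⟩ : Fin h) = k :=
      fun _ => Fin.ext hv1
    unfold dec
    rw [hmv, if_neg (by omega), if_neg (by omega), if_pos (by omega)]
    rw [dif_pos (by rw [hv1]; exact hu), if_pos hv2, hk]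
  case inl.pL k =>
    have hu : (k:ℕ) < h := k.isLt
    have hmv : Sum.elim (sV (r := r) pe) (eV (r := r) qe) (Sum.inl (Vx.pL k))
        = h*h+h + ((h-1-(k:ℕ))*3 + 0) := by
      show h*h+h + 3*(h-1-(k:ℕ)) = _; omega
    have hdm := blk_div (a := h-1-(k:ℕ)) (o := 0) (W := 3) (by omega) (by omega)
    have hsub : h*h+h + ((h-1-(k:ℕ))*3 + 0) - (h*h+h) = (h-1-(k:ℕ))*3 + 0 := by omega
    have hv1 : h-1-((h*h+h + ((h-1-(k:ℕ))*3 + 0) - (h*h+h))/3) = (k:ℕ) := by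
      rw [hsub, hdm.1]; omega
    have hv2 : (h*h+h + ((h-1-(k:ℕ))*3 + 0) - (h*h+h)) % 3 = 0 := by rw [hsub, hdm.2]
    have hk : ∀ pf, (⟨h-1-((h*h+h + ((h-1-(k:ℕ))*3 + 0) - (h*h+h))/3), pf⟩ : Fin h) = k :=
      fun _ => Fin.ext hv1
    unfold dec
    rw [hmv, if_neg (by omega), if_pos (by omega)]
    rw [dif_pos (by rw [hv1]; exact hu), if_pos hv2, hk]
  case inl.pR k b =>
    have hu : (k:ℕ) < h := k.isLt
    cases b
    · have hmv : Sum.elim (sV (r := r) pe) (eV (r := r) qe) (Sum.inl (Vx.pR k false))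
          = 2*(h*h)+5*h + ((h-1-(k:ℕ))*5 + 0) := by
        show 2*(h*h)+5*h + 5*(h-1-(k:ℕ)) + 0 = _; omega
      have hdm := blk_div (a := h-1-(k:ℕ)) (o := 0) (W := 5) (by omega) (by omega)
      have hsub : 2*(h*h)+5*h + ((h-1-(k:ℕ))*5 + 0) - (2*(h*h)+5*h) = (h-1-(k:ℕ))*5 + 0 := by
        omega
      have hv1 : h-1-((2*(h*h)+5*h + ((h-1-(k:ℕ))*5 + 0) - (2*(h*h)+5*h))/5) = (k:ℕ) := by
        rw [hsub, hdm.1]; omega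
      have hv2 : (2*(h*h)+5*h + ((h-1-(k:ℕ))*5 + 0) - (2*(h*h)+5*h)) % 5 = 0 := by
        rw [hsub, hdm.2]
      have hk : ∀ pf, (⟨h-1-((2*(h*h)+5*h + ((h-1-(k:ℕ))*5 + 0) - (2*(h*h)+5*h))/5), pf⟩ : Fin h) = k :=
        fun _ => Fin.ext hv1
      unfold dec
      rw [hmv, if_neg (by omega), if_neg (by omega), if_neg (by omega), if_pos (by omega)]
      rw [dif_pos (by rw [hv1]; exact hu), if_pos hv2, hk]
    · have hmv : Sum.elim (sV (r := r) pe) (eV (r := r) qe) (Sum.inl (Vx.pR k true))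
          = 2*(h*h)+5*h + ((h-1-(k:ℕ))*5 + 1) := by
        show 2*(h*h)+5*h + 5*(h-1-(k:ℕ)) + 1 = _; omega
      have hdm := blk_div (a := h-1-(k:ℕ)) (o := 1) (W := 5) (by omega) (by omega)
      have hsub : 2*(h*h)+5*h + ((h-1-(k:ℕ))*5 + 1) - (2*(h*h)+5*h) = (h-1-(k:ℕ))*5 + 1 := by
        omega
      have hv1 : h-1-((2*(h*h)+5*h + ((h-1-(k:ℕ))*5 + 1) - (2*(h*h)+5*h))/5) = (k:ℕ) := by
        rw [hsub, hdm.1]; omega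
      have hv2 : (2*(h*h)+5*h + ((h-1-(k:ℕ))*5 + 1) - (2*(h*h)+5*h)) % 5 = 1 := by
        rw [hsub, hdm.2]
      have hk : ∀ pf, (⟨h-1-((2*(h*h)+5*h + ((h-1-(k:ℕ))*5 + 1) - (2*(h*h)+5*h))/5), pf⟩ : Fin h) = k :=
        fun _ => Fin.ext hv1
      unfold dec
      rw [hmv, if_neg (by omega), if_neg (by omega), if_neg (by omega), if_pos (by omega)]
      rw [dif_pos (by rw [hv1]; exact hu), if_neg (by rw [hv2]; omega), if_pos hv2, hk]
  case inl.isl t =>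
    have ht : (t:ℕ) < r := t.isLt
    have hmv : Sum.elim (sV (r := r) pe) (eV (r := r) qe) (Sum.inl (Vx.isl t))
        = 2*(h*h)+10*h + ((t:ℕ)*2 + 0) := by
      show 2*(h*h)+10*h + 2*(t:ℕ) = _; omega
    have hdm := blk_div (a := (t:ℕ)) (o := 0) (W := 2) (by omega) (by omega)
    have hsub : 2*(h*h)+10*h + ((t:ℕ)*2 + 0) - (2*(h*h)+10*h) = (t:ℕ)*2 + 0 := by omega
    have hv1 : (2*(h*h)+10*h + ((t:ℕ)*2 + 0) - (2*(h*h)+10*h))/2 = (t:ℕ) := by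
      rw [hsub, hdm.1]
    have hv2 : (2*(h*h)+10*h + ((t:ℕ)*2 + 0) - (2*(h*h)+10*h)) % 2 = 0 := by
      rw [hsub, hdm.2]
    have hk : ∀ pf, (⟨(2*(h*h)+10*h + ((t:ℕ)*2 + 0) - (2*(h*h)+10*h))/2, pf⟩ : Fin r) = t :=
      fun _ => Fin.ext hv1
    unfold dec
    rw [hmv, if_neg (by omega), if_neg (by omega), if_neg (by omega), if_neg (by omega)]
    rw [dif_pos (by rw [hv1]; exact ht), if_pos hv2, hk]
  case inr.dat u v =>
    have hb := fin_blk v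
    have hp : (qe v u : ℕ) < h := (qe v u).isLt
    have hv : (v:ℕ) < h := v.isLt
    have hmv : Sum.elim (sV (r := r) pe) (eV (r := r) qe) (Sum.inr (Vx.dat u v))
        = h*h+4*h + ((v:ℕ)*(h+1) + (1 + (qe v u : ℕ))) := by
      show h*h+4*h + (v:ℕ)*(h+1) + (1 + (qe v u : ℕ)) = _; omega
    have hdm := blk_div (a := (v:ℕ)) (o := 1 + (qe v u : ℕ)) (W := h+1) (by omega) (by omega)
    have hsub : h*h+4*h + ((v:ℕ)*(h+1) + (1 + (qe v u : ℕ))) - (h*h+4*h)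
        = (v:ℕ)*(h+1) + (1 + (qe v u : ℕ)) := by omega
    have hv1 : (h*h+4*h + ((v:ℕ)*(h+1) + (1 + (qe v u : ℕ))) - (h*h+4*h))/(h+1) = (v:ℕ) := by
      rw [hsub, hdm.1]
    have hv2 : (h*h+4*h + ((v:ℕ)*(h+1) + (1 + (qe v u : ℕ))) - (h*h+4*h)) % (h+1)
        = 1 + (qe v u : ℕ) := by rw [hsub, hdm.2]
    have hk : ∀ pf, (⟨(h*h+4*h + ((v:ℕ)*(h+1) + (1 + (qe v u : ℕ))) - (h*h+4*h))/(h+1), pf⟩ : Fin h) = v :=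
      fun _ => Fin.ext hv1
    have hv3 : (h*h+4*h + ((v:ℕ)*(h+1) + (1 + (qe v u : ℕ))) - (h*h+4*h)) % (h+1) - 1
        = (qe v u : ℕ) := by rw [hv2]; omega
    have ho : ∀ pf, (⟨(h*h+4*h + ((v:ℕ)*(h+1) + (1 + (qe v u : ℕ))) - (h*h+4*h)) % (h+1) - 1, pf⟩ : Fin h) = qe v u :=
      fun _ => Fin.ext hv3
    unfold dec
    rw [hmv, if_neg (by omega), if_neg (by omega), if_pos (by omega)]
    rw [dif_pos (by rw [hv1]; exact hv), if_neg (by rw [hv2]; omega),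
      dif_pos (by rw [hv3]; exact hp), hk, ho, Equiv.symm_apply_apply]
  case inr.spL k =>
    have hu : (k:ℕ) < h := k.isLt
    have hmv : Sum.elim (sV (r := r) pe) (eV (r := r) qe) (Sum.inr (Vx.spL k))
        = h*h+h + ((h-1-(k:ℕ))*3 + 1) := by
      show h*h+h + 3*(h-1-(k:ℕ)) + 1 = _; omega
    have hdm := blk_div (a := h-1-(k:ℕ)) (o := 1) (W := 3) (by omega) (by omega)
    have hsub : h*h+h + ((h-1-(k:ℕ))*3 + 1) - (h*h+h) = (h-1-(k:ℕ))*3 + 1 := by omega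
    have hv1 : h-1-((h*h+h + ((h-1-(k:ℕ))*3 + 1) - (h*h+h))/3) = (k:ℕ) := by
      rw [hsub, hdm.1]; omega
    have hv2 : (h*h+h + ((h-1-(k:ℕ))*3 + 1) - (h*h+h)) % 3 = 1 := by rw [hsub, hdm.2]
    have hk : ∀ pf, (⟨h-1-((h*h+h + ((h-1-(k:ℕ))*3 + 1) - (h*h+h))/3), pf⟩ : Fin h) = k :=
      fun _ => Fin.ext hv1
    unfold dec
    rw [hmv, if_neg (by omega), if_pos (by omega)]
    rw [dif_pos (by rw [hv1]; exact hu), if_neg (by rw [hv2]; omega), if_pos hv2, hk]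
  case inr.spR k =>
    have hu : (k:ℕ) < h := k.isLt
    have hmv : Sum.elim (sV (r := r) pe) (eV (r := r) qe) (Sum.inr (Vx.spR k))
        = 2*(h*h)+5*h + ((h-1-(k:ℕ))*5 + 2) := by
      show 2*(h*h)+5*h + 5*(h-1-(k:ℕ)) + 2 = _; omega
    have hdm := blk_div (a := h-1-(k:ℕ)) (o := 2) (W := 5) (by omega) (by omega)
    have hsub : 2*(h*h)+5*h + ((h-1-(k:ℕ))*5 + 2) - (2*(h*h)+5*h) = (h-1-(k:ℕ))*5 + 2 := by
      omega
    have hv1 : h-1-((2*(h*h)+5*h + ((h-1-(k:ℕ))*5 + 2) - (2*(h*h)+5*h))/5) = (k:ℕ) := by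
      rw [hsub, hdm.1]; omega
    have hv2 : (2*(h*h)+5*h + ((h-1-(k:ℕ))*5 + 2) - (2*(h*h)+5*h)) % 5 = 2 := by
      rw [hsub, hdm.2]
    have hk : ∀ pf, (⟨h-1-((2*(h*h)+5*h + ((h-1-(k:ℕ))*5 + 2) - (2*(h*h)+5*h))/5), pf⟩ : Fin h) = k :=
      fun _ => Fin.ext hv1
    unfold dec
    rw [hmv, if_neg (by omega), if_neg (by omega), if_neg (by omega), if_pos (by omega)]
    rw [dif_pos (by rw [hv1]; exact hu), if_neg (by rw [hv2]; omega),
      if_neg (by rw [hv2]; omega), if_pos hv2, hk]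
  case inr.pL k =>
    have hu : (k:ℕ) < h := k.isLt
    have hmv : Sum.elim (sV (r := r) pe) (eV (r := r) qe) (Sum.inr (Vx.pL k))
        = h*h+h + ((h-1-(k:ℕ))*3 + 2) := by
      show h*h+h + 3*(h-1-(k:ℕ)) + 2 = _; omega
    have hdm := blk_div (a := h-1-(k:ℕ)) (o := 2) (W := 3) (by omega) (by omega)
    have hsub : h*h+h + ((h-1-(k:ℕ))*3 + 2) - (h*h+h) = (h-1-(k:ℕ))*3 + 2 := by omega
    have hv1 : h-1-((h*h+h + ((h-1-(k:ℕ))*3 + 2) - (h*h+h))/3) = (k:ℕ) := by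
      rw [hsub, hdm.1]; omega
    have hv2 : (h*h+h + ((h-1-(k:ℕ))*3 + 2) - (h*h+h)) % 3 = 2 := by rw [hsub, hdm.2]
    have hk : ∀ pf, (⟨h-1-((h*h+h + ((h-1-(k:ℕ))*3 + 2) - (h*h+h))/3), pf⟩ : Fin h) = k :=
      fun _ => Fin.ext hv1
    unfold dec
    rw [hmv, if_neg (by omega), if_pos (by omega)]
    rw [dif_pos (by rw [hv1]; exact hu), if_neg (by rw [hv2]; omega),
      if_neg (by rw [hv2]; omega), hk]
  case inr.pR k b =>
    have hu : (k:ℕ) < h := k.isLt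
    cases b
    · have hmv : Sum.elim (sV (r := r) pe) (eV (r := r) qe) (Sum.inr (Vx.pR k false))
          = 2*(h*h)+5*h + ((h-1-(k:ℕ))*5 + 4) := by
        show 2*(h*h)+5*h + 5*(h-1-(k:ℕ)) + 4 = _; omega
      have hdm := blk_div (a := h-1-(k:ℕ)) (o := 4) (W := 5) (by omega) (by omega)
      have hsub : 2*(h*h)+5*h + ((h-1-(k:ℕ))*5 + 4) - (2*(h*h)+5*h) = (h-1-(k:ℕ))*5 + 4 := by
        omega
      have hv1 : h-1-((2*(h*h)+5*h + ((h-1-(k:ℕ))*5 + 4) - (2*(h*h)+5*h))/5) = (k:ℕ) := by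
        rw [hsub, hdm.1]; omega
      have hv2 : (2*(h*h)+5*h + ((h-1-(k:ℕ))*5 + 4) - (2*(h*h)+5*h)) % 5 = 4 := by
        rw [hsub, hdm.2]
      have hk : ∀ pf, (⟨h-1-((2*(h*h)+5*h + ((h-1-(k:ℕ))*5 + 4) - (2*(h*h)+5*h))/5), pf⟩ : Fin h) = k :=
        fun _ => Fin.ext hv1
      unfold dec
      rw [hmv, if_neg (by omega), if_neg (by omega), if_neg (by omega), if_pos (by omega)]
      rw [dif_pos (by rw [hv1]; exact hu), if_neg (by rw [hv2]; omega),
        if_neg (by rw [hv2]; omega), if_neg (by rw [hv2]; omega),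
        if_neg (by rw [hv2]; omega), hk]
    · have hmv : Sum.elim (sV (r := r) pe) (eV (r := r) qe) (Sum.inr (Vx.pR k true))
          = 2*(h*h)+5*h + ((h-1-(k:ℕ))*5 + 3) := by
        show 2*(h*h)+5*h + 5*(h-1-(k:ℕ)) + 3 = _; omega
      have hdm := blk_div (a := h-1-(k:ℕ)) (o := 3) (W := 5) (by omega) (by omega)
      have hsub : 2*(h*h)+5*h + ((h-1-(k:ℕ))*5 + 3) - (2*(h*h)+5*h) = (h-1-(k:ℕ))*5 + 3 := by
        omega
      have hv1 : h-1-((2*(h*h)+5*h + ((h-1-(k:ℕ))*5 + 3) - (2*(h*h)+5*h))/5) = (k:ℕ) := by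
        rw [hsub, hdm.1]; omega
      have hv2 : (2*(h*h)+5*h + ((h-1-(k:ℕ))*5 + 3) - (2*(h*h)+5*h)) % 5 = 3 := by
        rw [hsub, hdm.2]
      have hk : ∀ pf, (⟨h-1-((2*(h*h)+5*h + ((h-1-(k:ℕ))*5 + 3) - (2*(h*h)+5*h))/5), pf⟩ : Fin h) = k :=
        fun _ => Fin.ext hv1
      unfold dec
      rw [hmv, if_neg (by omega), if_neg (by omega), if_neg (by omega), if_pos (by omega)]
      rw [dif_pos (by rw [hv1]; exact hu), if_neg (by rw [hv2]; omega),
        if_neg (by rw [hv2]; omega), if_neg (by rw [hv2]; omega), if_pos hv2, hk]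
  case inr.isl t =>
    have ht : (t:ℕ) < r := t.isLt
    have hmv : Sum.elim (sV (r := r) pe) (eV (r := r) qe) (Sum.inr (Vx.isl t))
        = 2*(h*h)+10*h + ((t:ℕ)*2 + 1) := by
      show 2*(h*h)+10*h + 2*(t:ℕ) + 1 = _; omega
    have hdm := blk_div (a := (t:ℕ)) (o := 1) (W := 2) (by omega) (by omega)
    have hsub : 2*(h*h)+10*h + ((t:ℕ)*2 + 1) - (2*(h*h)+10*h) = (t:ℕ)*2 + 1 := by omega
    have hv1 : (2*(h*h)+10*h + ((t:ℕ)*2 + 1) - (2*(h*h)+10*h))/2 = (t:ℕ) := by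
      rw [hsub, hdm.1]
    have hv2 : (2*(h*h)+10*h + ((t:ℕ)*2 + 1) - (2*(h*h)+10*h)) % 2 = 1 := by
      rw [hsub, hdm.2]
    have hk : ∀ pf, (⟨(2*(h*h)+10*h + ((t:ℕ)*2 + 1) - (2*(h*h)+10*h))/2, pf⟩ : Fin r) = t :=
      fun _ => Fin.ext hv1
    unfold dec
    rw [hmv, if_neg (by omega), if_neg (by omega), if_neg (by omega), if_neg (by omega)]
    rw [dif_pos (by rw [hv1]; exact ht), if_neg (by rw [hv2]; omega), hk]

theorem elim_inj : Function.Injective (Sum.elim (sV pe) (eV qe) : Vx h r ⊕ Vx h r → ℕ) := by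
  intro a b H
  have ha := dec_code pe qe a
  rw [H, dec_code pe qe b] at ha
  exact (Option.some_inj.mp ha).symm


lemma adj_spL_spL (k j : Fin h) : ¬ (G pe qe (r := r)).Adj (.spL k) (.spL j) := by
  have hb1 := fin_blk k; have hb2 := fin_blk j
  have hc := cmp_blk (k:ℕ) (j:ℕ) (h+1)
  simp only [adj_iff, ovl, sV, eV, ne_eq, Vx.spL.injEq, Fin.ext_iff]
  omega

lemma adj_spL_pL (k j : Fin h) :
    (G pe qe (r := r)).Adj (.spL k) (.pL j) ↔ (k:ℕ) = (j:ℕ) := by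
  have hb1 := fin_blk k
  have hj : (j:ℕ) < h := j.isLt; have hk : (k:ℕ) < h := k.isLt
  simp only [adj_iff, ovl, sV, eV, ne_eq, reduceCtorEq, not_false_eq_true, true_and]
  omega

lemma adj_spL_spR (k j : Fin h) : ¬ (G pe qe (r := r)).Adj (.spL k) (.spR j) := by
  have hb1 := fin_blk k; have hb2 := fin_blk j
  have hj : (j:ℕ) < h := j.isLt; have hk : (k:ℕ) < h := k.isLt
  simp only [adj_iff, ovl, sV, eV, ne_eq, reduceCtorEq, not_false_eq_true, true_and]
  omega

lemma adj_spL_pR (k j : Fin h) (b : Bool) : ¬ (G pe qe (r := r)).Adj (.spL k) (.pR j b) := by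
  have hb1 := fin_blk k
  have hj : (j:ℕ) < h := j.isLt; have hk : (k:ℕ) < h := k.isLt
  cases b <;>
  · simp only [adj_iff, ovl, sV, eV, ne_eq, reduceCtorEq, not_false_eq_true, true_and, cond]
    omega

lemma adj_spL_isl (k : Fin h) (t : Fin r) : ¬ (G pe qe (r := r)).Adj (.spL k) (.isl t) := by
  have hb1 := fin_blk k
  have hj : (t:ℕ) < r := t.isLt; have hk : (k:ℕ) < h := k.isLt
  simp only [adj_iff, ovl, sV, eV, ne_eq, reduceCtorEq, not_false_eq_true, true_and]
  omega

lemma adj_spL_dat (k u v : Fin h) :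
    (G pe qe (r := r)).Adj (.spL k) (.dat u v) ↔ (k:ℕ) ≤ (u:ℕ) := by
  have hb1 := fin_blk u; have hb2 := fin_blk k
  have hp : (pe u v : ℕ) < h := (pe u v).isLt
  have hq : (qe v u : ℕ) < h := (qe v u).isLt
  have hc := cmp_blk (k:ℕ) (u:ℕ) (h+1)
  simp only [adj_iff, ovl, sV, eV, ne_eq, reduceCtorEq, not_false_eq_true, true_and]
  omega

lemma adj_spR_spR (k j : Fin h) : ¬ (G pe qe (r := r)).Adj (.spR k) (.spR j) := by
  have hb1 := fin_blk k; have hb2 := fin_blk j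
  have hc := cmp_blk (k:ℕ) (j:ℕ) (h+1)
  simp only [adj_iff, ovl, sV, eV, ne_eq, Vx.spR.injEq, Fin.ext_iff]
  omega

lemma adj_spR_pR (k j : Fin h) (b : Bool) :
    (G pe qe (r := r)).Adj (.spR k) (.pR j b) ↔ (k:ℕ) = (j:ℕ) := by
  have hb1 := fin_blk k
  have hj : (j:ℕ) < h := j.isLt; have hk : (k:ℕ) < h := k.isLt
  cases b <;>
  · simp only [adj_iff, ovl, sV, eV, ne_eq, reduceCtorEq, not_false_eq_true, true_and, cond]
    omega

lemma adj_spR_pL (k j : Fin h) : ¬ (G pe qe (r := r)).Adj (.spR k) (.pL j) := by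
  have hb1 := fin_blk k
  have hj : (j:ℕ) < h := j.isLt; have hk : (k:ℕ) < h := k.isLt
  simp only [adj_iff, ovl, sV, eV, ne_eq, reduceCtorEq, not_false_eq_true, true_and]
  omega

lemma adj_spR_isl (k : Fin h) (t : Fin r) : ¬ (G pe qe (r := r)).Adj (.spR k) (.isl t) := by
  have hb1 := fin_blk k
  have hj : (t:ℕ) < r := t.isLt; have hk : (k:ℕ) < h := k.isLt
  simp only [adj_iff, ovl, sV, eV, ne_eq, reduceCtorEq, not_false_eq_true, true_and]
  omega

lemma adj_spR_dat (k u v : Fin h) :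
    (G pe qe (r := r)).Adj (.spR k) (.dat u v) ↔ (k:ℕ) ≤ (v:ℕ) := by
  have hb1 := fin_blk u; have hb2 := fin_blk k; have hb3 := fin_blk v
  have hp : (pe u v : ℕ) < h := (pe u v).isLt
  have hq : (qe v u : ℕ) < h := (qe v u).isLt
  have hc := cmp_blk (k:ℕ) (v:ℕ) (h+1)
  simp only [adj_iff, ovl, sV, eV, ne_eq, reduceCtorEq, not_false_eq_true, true_and]
  omega

lemma adj_pL_pL (k j : Fin h) : ¬ (G pe qe (r := r)).Adj (.pL k) (.pL j) := by
  have hj : (j:ℕ) < h := j.isLt; have hk : (k:ℕ) < h := k.isLt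
  simp only [adj_iff, ovl, sV, eV, ne_eq, Vx.pL.injEq, Fin.ext_iff]
  omega

lemma adj_pL_pR (k j : Fin h) (b : Bool) : ¬ (G pe qe (r := r)).Adj (.pL k) (.pR j b) := by
  have hj : (j:ℕ) < h := j.isLt; have hk : (k:ℕ) < h := k.isLt
  cases b <;>
  · simp only [adj_iff, ovl, sV, eV, ne_eq, reduceCtorEq, not_false_eq_true, true_and, cond]
    omega

lemma adj_pL_isl (k : Fin h) (t : Fin r) : ¬ (G pe qe (r := r)).Adj (.pL k) (.isl t) := by
  have hj : (t:ℕ) < r := t.isLt; have hk : (k:ℕ) < h := k.isLt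
  simp only [adj_iff, ovl, sV, eV, ne_eq, reduceCtorEq, not_false_eq_true, true_and]
  omega

lemma adj_pL_dat (k u v : Fin h) : ¬ (G pe qe (r := r)).Adj (.pL k) (.dat u v) := by
  have hb1 := fin_blk u; have hb3 := fin_blk v
  have hp : (pe u v : ℕ) < h := (pe u v).isLt
  have hq : (qe v u : ℕ) < h := (qe v u).isLt
  have hk : (k:ℕ) < h := k.isLt
  simp only [adj_iff, ovl, sV, eV, ne_eq, reduceCtorEq, not_false_eq_true, true_and]
  omega

lemma adj_pR_pR (k j : Fin h) (b b' : Bool) :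
    ¬ (G pe qe (r := r)).Adj (.pR k b) (.pR j b') := by
  have hj : (j:ℕ) < h := j.isLt; have hk : (k:ℕ) < h := k.isLt
  cases b <;> cases b' <;>
  · simp only [adj_iff, ovl, sV, eV, ne_eq, Vx.pR.injEq, Fin.ext_iff, cond]
    omega

lemma adj_pR_dat (k u v : Fin h) (b : Bool) :
    ¬ (G pe qe (r := r)).Adj (.pR k b) (.dat u v) := by
  have hb1 := fin_blk u; have hb3 := fin_blk v
  have hp : (pe u v : ℕ) < h := (pe u v).isLt
  have hq : (qe v u : ℕ) < h := (qe v u).isLt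
  have hk : (k:ℕ) < h := k.isLt
  cases b <;>
  · simp only [adj_iff, ovl, sV, eV, ne_eq, reduceCtorEq, not_false_eq_true, true_and, cond]
    omega

lemma adj_pR_isl (k : Fin h) (t : Fin r) (b : Bool) :
    ¬ (G pe qe (r := r)).Adj (.pR k b) (.isl t) := by
  have hj : (t:ℕ) < r := t.isLt; have hk : (k:ℕ) < h := k.isLt
  cases b <;>
  · simp only [adj_iff, ovl, sV, eV, ne_eq, reduceCtorEq, not_false_eq_true, true_and, cond]
    omega

lemma adj_isl_isl (t t' : Fin r) : ¬ (G pe qe (r := r)).Adj (.isl t) (.isl t') := by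
  have hj : (t:ℕ) < r := t.isLt; have hk : (t':ℕ) < r := t'.isLt
  have hc := cmp_blk (t:ℕ) (t':ℕ) 2
  simp only [adj_iff, ovl, sV, eV, ne_eq, Vx.isl.injEq, Fin.ext_iff]
  omega

lemma adj_isl_dat (t : Fin r) (u v : Fin h) :
    ¬ (G pe qe (r := r)).Adj (.isl t) (.dat u v) := by
  have hb1 := fin_blk u; have hb3 := fin_blk v
  have hp : (pe u v : ℕ) < h := (pe u v).isLt
  have hq : (qe v u : ℕ) < h := (qe v u).isLt
  have hk : (t:ℕ) < r := t.isLt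
  simp only [adj_iff, ovl, sV, eV, ne_eq, reduceCtorEq, not_false_eq_true, true_and]
  omega

lemma adj_dat_same_u (u v v' : Fin h) (hne : v ≠ v') :
    (G pe qe (r := r)).Adj (.dat u v) (.dat u v') ↔
      ((pe u v : ℕ) < (pe u v' : ℕ) ↔ (v:ℕ) < (v':ℕ)) := by
  have hb1 := fin_blk v; have hb2 := fin_blk v'
  have hb0 := fin_blk u
  have hp : (pe u v : ℕ) < h := (pe u v).isLt
  have hp' : (pe u v' : ℕ) < h := (pe u v').isLt
  have hq : (qe v u : ℕ) < h := (qe v u).isLt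
  have hq' : (qe v' u : ℕ) < h := (qe v' u).isLt
  have hc := cmp_blk3 (v:ℕ) (v':ℕ) (h+1)
  have hpe : (pe u v : ℕ) ≠ (pe u v' : ℕ) := by
    intro H; exact hne ((pe u).injective (Fin.ext H))
  have hvv : (v:ℕ) ≠ (v':ℕ) := fun H => hne (Fin.ext H)
  simp only [adj_iff, ovl, sV, eV, ne_eq, Vx.dat.injEq, Fin.ext_iff]
  omega

lemma adj_dat_same_v (v u u' : Fin h) (hne : u ≠ u') :
    (G pe qe (r := r)).Adj (.dat u v) (.dat u' v) ↔
      ((u:ℕ) < (u':ℕ) ↔ (qe v u : ℕ) < (qe v u' : ℕ)) := by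
  have hb1 := fin_blk u; have hb2 := fin_blk u'
  have hb0 := fin_blk v
  have hp : (pe u v : ℕ) < h := (pe u v).isLt
  have hp' : (pe u' v : ℕ) < h := (pe u' v).isLt
  have hq : (qe v u : ℕ) < h := (qe v u).isLt
  have hq' : (qe v u' : ℕ) < h := (qe v u').isLt
  have hc := cmp_blk3 (u:ℕ) (u':ℕ) (h+1)
  have hpe : (qe v u : ℕ) ≠ (qe v u' : ℕ) := by
    intro H; exact hne ((qe v).injective (Fin.ext H))
  have huu : (u:ℕ) ≠ (u':ℕ) := fun H => hne (Fin.ext H)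
  simp only [adj_iff, ovl, sV, eV, ne_eq, Vx.dat.injEq, Fin.ext_iff]
  omega

open Finset


lemma nbr_pL (k : Fin h) :
    (G pe qe (r := r)).neighborFinset (.pL k) = {Vx.spL k} := by
  ext w
  rw [SimpleGraph.mem_neighborFinset, Finset.mem_singleton]
  cases w with
  | dat u v => simp [adj_pL_dat pe qe k u v]
  | spL j =>
      rw [(G pe qe).adj_comm, adj_spL_pL]
      simp [Fin.ext_iff, eq_comm]
  | spR j =>
      have := adj_spR_pL pe qe (r := r) j k
      rw [(G pe qe).adj_comm]
      simp [this]
  | pL j => simp [adj_pL_pL pe qe k j]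
  | pR j b => simp [adj_pL_pR pe qe k j b]
  | isl t => simp [adj_pL_isl pe qe k t]

lemma nbr_pR (k : Fin h) (b : Bool) :
    (G pe qe (r := r)).neighborFinset (.pR k b) = {Vx.spR k} := by
  ext w
  rw [SimpleGraph.mem_neighborFinset, Finset.mem_singleton]
  cases w with
  | dat u v =>
      have := adj_pR_dat pe qe (r := r) k u v b
      simp [this]
  | spL j =>
      have := adj_spL_pR pe qe (r := r) j k b
      rw [(G pe qe).adj_comm]
      simp [this]
  | spR j =>
      rw [(G pe qe).adj_comm, adj_spR_pR]
      simp [Fin.ext_iff, eq_comm]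
  | pL j =>
      have := adj_pL_pR pe qe (r := r) j k b
      rw [(G pe qe).adj_comm]
      simp [this]
  | pR j b' => simp [adj_pR_pR pe qe k j b b']
  | isl t => simp [adj_pR_isl pe qe k t b]

lemma nbr_isl (t : Fin r) :
    (G pe qe (r := r)).neighborFinset (.isl t) = ∅ := by
  ext w
  rw [SimpleGraph.mem_neighborFinset]
  cases w with
  | dat u v => simp [adj_isl_dat pe qe t u v]
  | spL j =>
      have := adj_spL_isl pe qe (r := r) j t
      rw [(G pe qe).adj_comm]; simp [this]
  | spR j =>
      have := adj_spR_isl pe qe (r := r) j t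
      rw [(G pe qe).adj_comm]; simp [this]
  | pL j =>
      have := adj_pL_isl pe qe (r := r) j t
      rw [(G pe qe).adj_comm]; simp [this]
  | pR j b =>
      have := adj_pR_isl pe qe (r := r) j t b
      rw [(G pe qe).adj_comm]; simp [this]
  | isl t' => simp [adj_isl_isl pe qe t t']

lemma nbr_spL (k : Fin h) :
    (G pe qe (r := r)).neighborFinset (.spL k) =
      insert (Vx.pL k) (((Finset.Ici k) ×ˢ (Finset.univ : Finset (Fin h))).image
        fun p => Vx.dat p.1 p.2) := by
  ext w
  rw [SimpleGraph.mem_neighborFinset, Finset.mem_insert, Finset.mem_image]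
  cases w with
  | dat u v =>
      rw [adj_spL_dat]
      simp only [Finset.mem_product, Finset.mem_Ici, Finset.mem_univ, and_true,
        Vx.dat.injEq, reduceCtorEq, false_or]
      constructor
      · intro H; exact ⟨(u, v), H, rfl, rfl⟩
      · rintro ⟨p, hp, h1, h2⟩; subst h1; subst h2; exact hp
  | spL j => simp [adj_spL_spL pe qe k j]
  | spR j => simp [adj_spL_spR pe qe k j]
  | pL j =>
      rw [adj_spL_pL]
      simp [Fin.ext_iff, eq_comm]
  | pR j b => simp [adj_spL_pR pe qe k j b]
  | isl t => simp [adj_spL_isl pe qe k t]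

lemma nbr_spR (k : Fin h) :
    (G pe qe (r := r)).neighborFinset (.spR k) =
      insert (Vx.pR k false) (insert (Vx.pR k true)
        (((Finset.univ : Finset (Fin h)) ×ˢ (Finset.Ici k)).image
          fun p => Vx.dat p.1 p.2)) := by
  ext w
  rw [SimpleGraph.mem_neighborFinset, Finset.mem_insert, Finset.mem_insert, Finset.mem_image]
  cases w with
  | dat u v =>
      rw [adj_spR_dat]
      simp only [Finset.mem_product, Finset.mem_Ici, Finset.mem_univ, true_and,
        Vx.dat.injEq, reduceCtorEq, false_or]
      constructor
      · intro H; exact ⟨(u, v), H, rfl, rfl⟩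
      · rintro ⟨p, hp, h1, h2⟩; subst h1; subst h2; exact hp
  | spL j =>
      have := adj_spL_spR pe qe (r := r) j k
      rw [(G pe qe).adj_comm]; simp [this]
  | spR j => simp [adj_spR_spR pe qe k j]
  | pL j => simp [adj_spR_pL pe qe k j]
  | pR j b =>
      rw [adj_spR_pR]
      cases b <;> simp [Fin.ext_iff, eq_comm]
  | isl t => simp [adj_spR_isl pe qe k t]

lemma dat_inj2 : Function.Injective (fun p : Fin h × Fin h => (Vx.dat p.1 p.2 : Vx h r)) := by
  rintro ⟨a, b⟩ ⟨c, d⟩ H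
  simpa [Vx.dat.injEq, Prod.ext_iff] using H

lemma deg_pL (k : Fin h) : (G pe qe (r := r)).degree (.pL k) = 1 := by
  rw [← SimpleGraph.card_neighborFinset_eq_degree, nbr_pL]; rfl

lemma deg_pR (k : Fin h) (b : Bool) : (G pe qe (r := r)).degree (.pR k b) = 1 := by
  rw [← SimpleGraph.card_neighborFinset_eq_degree, nbr_pR]; rfl

lemma deg_isl (t : Fin r) : (G pe qe (r := r)).degree (.isl t) = 0 := by
  rw [← SimpleGraph.card_neighborFinset_eq_degree, nbr_isl]; rfl

lemma deg_spL (k : Fin h) : (G pe qe (r := r)).degree (.spL k) = (h - k)*h + 1 := by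
  rw [← SimpleGraph.card_neighborFinset_eq_degree, nbr_spL,
    Finset.card_insert_of_notMem (by simp), Finset.card_image_of_injective _ (dat_inj2),
    Finset.card_product, Fin.card_Ici, Finset.card_univ, Fintype.card_fin]

lemma deg_spR (k : Fin h) : (G pe qe (r := r)).degree (.spR k) = (h - k)*h + 2 := by
  rw [← SimpleGraph.card_neighborFinset_eq_degree, nbr_spR,
    Finset.card_insert_of_notMem (by simp), Finset.card_insert_of_notMem (by simp),
    Finset.card_image_of_injective _ (dat_inj2),
    Finset.card_product, Fin.card_Ici, Finset.card_univ, Fintype.card_fin]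
  ring


lemma deg_dat_ge (hh : 3 ≤ h) (u v : Fin h) :
    2 ≤ (G pe qe (r := r)).degree (.dat u v) := by
  have hz : 0 < h := by omega
  set z : Fin h := ⟨0, hz⟩ with hzd
  rw [← SimpleGraph.card_neighborFinset_eq_degree]
  have hsub : ({Vx.spL z, Vx.spR z} : Finset (Vx h r)) ⊆
      (G pe qe).neighborFinset (.dat u v) := by
    intro w hw
    rw [SimpleGraph.mem_neighborFinset]
    rcases Finset.mem_insert.mp hw with He | Hm
    · subst He
      exact ((G pe qe).adj_comm _ _).mp ((adj_spL_dat pe qe z u v).mpr (Nat.zero_le _))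
    · rw [Finset.mem_singleton.mp Hm]
      exact ((G pe qe).adj_comm _ _).mp ((adj_spR_dat pe qe z u v).mpr (Nat.zero_le _))
  calc 2 = ({Vx.spL z, Vx.spR z} : Finset (Vx h r)).card := by
        rw [Finset.card_pair (by simp)]
  _ ≤ _ := Finset.card_le_card hsub

lemma deg_one_iff (hh : 3 ≤ h) (w : Vx h r) :
    (G pe qe).degree w = 1 ↔ ((∃ k, w = .pL k) ∨ (∃ k b, w = .pR k b)) := by
  cases w with
  | dat u v =>
      have := deg_dat_ge pe qe (r := r) hh u v
      simp only [reduceCtorEq, exists_false, or_self, iff_false]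
      omega
  | spL k =>
      rw [deg_spL]
      have h1 : 1*h ≤ (h - (k:ℕ))*h := Nat.mul_le_mul_right h (by have := k.isLt; omega)
      simp only [reduceCtorEq, exists_false, exists_const, or_self, iff_false]
      omega
  | spR k =>
      rw [deg_spR]
      simp only [reduceCtorEq, exists_false, exists_const, or_self, iff_false]
      omega
  | pL k => simp [deg_pL]
  | pR k b => simp [deg_pR]
  | isl t => simp [deg_isl]

variable {pe' qe' : Fin h → Equiv.Perm (Fin h)}

lemma iso_deg (φ : (G pe qe (r := r)) ≃g (G pe' qe' (r := r))) (w : Vx h r) :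
    (G pe' qe' (r := r)).degree (φ w) = (G pe qe).degree w := by
  rw [← SimpleGraph.card_neighborSet_eq_degree, ← SimpleGraph.card_neighborSet_eq_degree]
  exact (Fintype.card_congr (φ.mapNeighborSet w)).symm

lemma phi_spL (φ : (G pe qe (r := r)) ≃g (G pe' qe' (r := r))) (hh : 3 ≤ h) (k : Fin h) :
    φ (.spL k) = .spL k := by
  have hk : (k:ℕ) < h := k.isLt
  have hdeg1 : (G pe' qe' (r := r)).degree (φ (.pL k)) = 1 := by
    rw [iso_deg pe qe φ, deg_pL]
  have hpend := (deg_one_iff pe' qe' hh (φ (.pL k))).mp hdeg1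
  have hadj : (G pe' qe' (r := r)).Adj (φ (.spL k)) (φ (.pL k)) :=
    φ.map_adj_iff.mpr ((adj_spL_pL pe qe k k).mpr rfl)
  have hdegL : (G pe' qe' (r := r)).degree (φ (.spL k)) = (h - (k:ℕ))*h + 1 := by
    rw [iso_deg pe qe φ, deg_spL]
  rcases hpend with ⟨j, hj⟩ | ⟨j, b, hj⟩
  · rw [hj] at hadj
    have heq : φ (.spL k) = .spL j := by
      have hmem : φ (.spL k) ∈ (G pe' qe' (r := r)).neighborFinset (.pL j) := by
        rw [SimpleGraph.mem_neighborFinset]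
        exact ((G pe' qe' (r := r)).adj_comm _ _).mp hadj
      rw [nbr_pL] at hmem
      simpa using hmem
    rw [heq, deg_spL] at hdegL
    rw [heq]
    have e := blk_inj (W := h) (o := 1) (o' := 1) (by omega) (by omega) hdegL
    have hj' : (j:ℕ) < h := j.isLt
    congr 1
    exact Fin.ext (by omega)
  · exfalso
    rw [hj] at hadj
    have heq : φ (.spL k) = .spR j := by
      have hmem : φ (.spL k) ∈ (G pe' qe' (r := r)).neighborFinset (.pR j b) := by
        rw [SimpleGraph.mem_neighborFinset]
        exact ((G pe' qe' (r := r)).adj_comm _ _).mp hadj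
      rw [nbr_pR] at hmem
      simpa using hmem
    rw [heq, deg_spR] at hdegL
    have e := blk_inj (W := h) (o := 2) (o' := 1) (by omega) (by omega) hdegL
    omega

lemma phi_spR (φ : (G pe qe (r := r)) ≃g (G pe' qe' (r := r))) (hh : 3 ≤ h) (k : Fin h) :
    φ (.spR k) = .spR k := by
  have hk : (k:ℕ) < h := k.isLt
  have hdeg1 : (G pe' qe' (r := r)).degree (φ (.pR k false)) = 1 := by
    rw [iso_deg pe qe φ, deg_pR]
  have hpend := (deg_one_iff pe' qe' hh (φ (.pR k false))).mp hdeg1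
  have hadj : (G pe' qe' (r := r)).Adj (φ (.spR k)) (φ (.pR k false)) :=
    φ.map_adj_iff.mpr ((adj_spR_pR pe qe k k false).mpr rfl)
  have hdegL : (G pe' qe' (r := r)).degree (φ (.spR k)) = (h - (k:ℕ))*h + 2 := by
    rw [iso_deg pe qe φ, deg_spR]
  rcases hpend with ⟨j, hj⟩ | ⟨j, b, hj⟩
  · exfalso
    rw [hj] at hadj
    have heq : φ (.spR k) = .spL j := by
      have hmem : φ (.spR k) ∈ (G pe' qe' (r := r)).neighborFinset (.pL j) := by
        rw [SimpleGraph.mem_neighborFinset]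
        exact ((G pe' qe' (r := r)).adj_comm _ _).mp hadj
      rw [nbr_pL] at hmem
      simpa using hmem
    rw [heq, deg_spL] at hdegL
    have e := blk_inj (W := h) (o := 1) (o' := 2) (by omega) (by omega) hdegL
    omega
  · rw [hj] at hadj
    have heq : φ (.spR k) = .spR j := by
      have hmem : φ (.spR k) ∈ (G pe' qe' (r := r)).neighborFinset (.pR j b) := by
        rw [SimpleGraph.mem_neighborFinset]
        exact ((G pe' qe' (r := r)).adj_comm _ _).mp hadj
      rw [nbr_pR] at hmem
      simpa using hmem
    rw [heq, deg_spR] at hdegL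
    rw [heq]
    have e := blk_inj (W := h) (o := 2) (o' := 2) (by omega) (by omega) hdegL
    have hj' : (j:ℕ) < h := j.isLt
    congr 1
    exact Fin.ext (by omega)

lemma phi_dat (φ : (G pe qe (r := r)) ≃g (G pe' qe' (r := r))) (hh : 3 ≤ h) (u v : Fin h) :
    φ (.dat u v) = .dat u v := by
  have hz : 0 < h := by omega
  set z : Fin h := ⟨0, hz⟩ with hzd
  have hadj0 : (G pe qe (r := r)).Adj (.spL z) (.dat u v) :=
    (adj_spL_dat pe qe z u v).mpr (Nat.zero_le _)
  have hadj : (G pe' qe' (r := r)).Adj (.spL z) (φ (.dat u v)) := by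
    have H := φ.map_adj_iff.mpr hadj0
    rwa [phi_spL pe qe φ hh z] at H
  have hmem : φ (.dat u v) ∈ (G pe' qe' (r := r)).neighborFinset (.spL z) := by
    rw [SimpleGraph.mem_neighborFinset]; exact hadj
  rw [nbr_spL] at hmem
  rcases Finset.mem_insert.mp hmem with He | Hm
  · exfalso
    have hd := iso_deg pe qe φ (.dat u v)
    rw [He, deg_pL] at hd
    have := deg_dat_ge pe qe (r := r) hh u v
    omega
  · obtain ⟨p, -, hpe⟩ := Finset.mem_image.mp Hm
    obtain ⟨u', v'⟩ := p
    have heq : φ (.dat u v) = .dat u' v' := hpe.symm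
    have keyL : ∀ j : Fin h, ((j:ℕ) ≤ (u':ℕ) ↔ (j:ℕ) ≤ (u:ℕ)) := by
      intro j
      have H : (G pe' qe' (r := r)).Adj (.spL j) (φ (.dat u v)) ↔
          (G pe qe (r := r)).Adj (.spL j) (.dat u v) := by
        conv_lhs => rw [← phi_spL pe qe φ hh j]
        exact φ.map_adj_iff
      rw [heq, adj_spL_dat, adj_spL_dat] at H
      exact H
    have keyR : ∀ j : Fin h, ((j:ℕ) ≤ (v':ℕ) ↔ (j:ℕ) ≤ (v:ℕ)) := by
      intro j
      have H : (G pe' qe' (r := r)).Adj (.spR j) (φ (.dat u v)) ↔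
          (G pe qe (r := r)).Adj (.spR j) (.dat u v) := by
        conv_lhs => rw [← phi_spR pe qe φ hh j]
        exact φ.map_adj_iff
      rw [heq, adj_spR_dat, adj_spR_dat] at H
      exact H
    have hu' : u' = u := Fin.ext (le_antisymm ((keyL u').mp le_rfl) ((keyL u).mpr le_rfl))
    have hv' : v' = v := Fin.ext (le_antisymm ((keyR v').mp le_rfl) ((keyR v).mpr le_rfl))
    rw [heq, hu', hv']


lemma perm_eq_of_lt_iff {f g : Equiv.Perm (Fin h)}
    (H : ∀ a b, ((f a : ℕ) < (f b : ℕ) ↔ (g a : ℕ) < (g b : ℕ))) : f = g := by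
  have hs : StrictMono (fun a => g (f.symm a) : Fin h → Fin h) := by
    intro a b hab
    have h1 : (f (f.symm a) : ℕ) < (f (f.symm b) : ℕ) := by
      rw [Equiv.apply_symm_apply, Equiv.apply_symm_apply]
      exact hab
    exact (H _ _).mp h1
  have hr : Set.range (fun a => g (f.symm a) : Fin h → Fin h)
      = Set.range (id : Fin h → Fin h) := by
    rw [Set.range_id]
    exact Set.range_eq_univ.mpr (g.surjective.comp f.symm.surjective)
  have he := (StrictMono.range_inj hs strictMono_id).mp hr
  apply Equiv.ext
  intro x
  have := congrFun he (f x)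
  simp only [Equiv.symm_apply_apply, id_eq] at this
  exact this.symm

variable {pe qe pe' qe' : Fin h → Equiv.Perm (Fin h)}

theorem param_inj (hh : 3 ≤ h) (φ : (G pe qe (r := r)) ≃g (G pe' qe' (r := r))) :
    pe = pe' ∧ qe = qe' := by
  have adj_iff_dat : ∀ x y : Fin h × Fin h,
      ((G pe' qe' (r := r)).Adj (.dat x.1 x.2) (.dat y.1 y.2) ↔
       (G pe qe (r := r)).Adj (.dat x.1 x.2) (.dat y.1 y.2)) := by
    intro x y
    conv_lhs => rw [← phi_dat pe qe φ hh x.1 x.2, ← phi_dat pe qe φ hh y.1 y.2]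
    exact φ.map_adj_iff
  constructor
  · funext u
    apply perm_eq_of_lt_iff
    intro a b
    rcases eq_or_ne a b with rfl | hne
    · simp
    · have key := adj_iff_dat (u, a) (u, b)
      rw [adj_dat_same_u pe qe u a b hne, adj_dat_same_u pe' qe' u a b hne] at key
      have hab : (a:ℕ) ≠ (b:ℕ) := fun H => hne (Fin.ext H)
      by_cases hc : (a:ℕ) < (b:ℕ)
      · simp only [hc, iff_true] at key
        exact key.symm
      · simp only [hc, iff_false] at key
        have h1 : (pe u a : ℕ) ≠ (pe u b : ℕ) := by
          intro H; exact hne ((pe u).injective (Fin.ext H))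
        have h2 : (pe' u a : ℕ) ≠ (pe' u b : ℕ) := by
          intro H; exact hne ((pe' u).injective (Fin.ext H))
        constructor
        · intro hlt
          by_contra hnot
          exact (key.mpr (by omega)) (by omega)
        · intro hlt
          by_contra hnot
          exact (key.mp (by omega)) (by omega)
  · funext v
    apply perm_eq_of_lt_iff
    intro a b
    rcases eq_or_ne a b with rfl | hne
    · simp
    · have key := adj_iff_dat (a, v) (b, v)
      rw [adj_dat_same_v pe qe v a b hne, adj_dat_same_v pe' qe' v a b hne] at key
      have hab : (a:ℕ) ≠ (b:ℕ) := fun H => hne (Fin.ext H)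
      have h1 : (qe v a : ℕ) ≠ (qe v b : ℕ) := by
        intro H; exact hne ((qe v).injective (Fin.ext H))
      have h2 : (qe' v a : ℕ) ≠ (qe' v b : ℕ) := by
        intro H; exact hne ((qe' v).injective (Fin.ext H))
      by_cases hc : (a:ℕ) < (b:ℕ)
      · simp only [hc, true_iff] at key
        exact key.symm
      · simp only [hc, false_iff] at key
        constructor
        · intro hlt
          by_contra hnot
          exact (key.mpr (by omega)) (by omega)
        · intro hlt
          by_contra hnot
          exact (key.mp (by omega)) (by omega)

end CGaux

namespace CGaux2
open Real

lemma pow_le_exp_mul_fact (m : ℕ) : (m:ℝ)^m ≤ Real.exp 1 ^ m * m.factorial := by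
  induction m with
  | zero => simp
  | succ k ih =>
    have h1 : ((k:ℝ)+1)^k ≤ Real.exp 1 * (k:ℝ)^k := by
      rcases Nat.eq_zero_or_pos k with rfl | hk0
      · simpa using Real.one_le_exp (by norm_num)
      · have hkR : (0:ℝ) < k := by exact_mod_cast hk0
        have hsplit : (k:ℝ)+1 = k * (1 + 1/k) := by field_simp
        rw [hsplit, mul_pow]
        have h3 : (1 + 1/(k:ℝ)) ≤ Real.exp (1/k) := by
          have := Real.add_one_le_exp (1/(k:ℝ)); linarith
        have h2 : (1 + 1/(k:ℝ))^k ≤ Real.exp 1 := by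
          calc (1 + 1/(k:ℝ))^k ≤ (Real.exp (1/k))^k := by
                apply pow_le_pow_left₀ (by positivity) h3
          _ = Real.exp ((k:ℕ) * (1/(k:ℝ))) := by rw [← Real.exp_nat_mul]
          _ = Real.exp 1 := by
                congr 1
                field_simp
        calc (k:ℝ)^k * (1+1/(k:ℝ))^k ≤ (k:ℝ)^k * Real.exp 1 :=
              mul_le_mul_of_nonneg_left h2 (by positivity)
        _ = Real.exp 1 * (k:ℝ)^k := by ring
    have hkk : ((k+1:ℕ):ℝ) = (k:ℝ)+1 := by push_cast; ring
    calc ((k+1:ℕ):ℝ)^(k+1) = ((k:ℝ)+1) * ((k:ℝ)+1)^k := by rw [hkk]; ring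
    _ ≤ ((k:ℝ)+1) * (Real.exp 1 * (k:ℝ)^k) :=
          mul_le_mul_of_nonneg_left h1 (by positivity)
    _ ≤ ((k:ℝ)+1) * (Real.exp 1 * (Real.exp 1 ^ k * k.factorial)) := by
          apply mul_le_mul_of_nonneg_left _ (by positivity)
          exact mul_le_mul_of_nonneg_left ih (Real.exp_pos 1).le
    _ = Real.exp 1 ^ (k+1) * (((k:ℝ)+1) * k.factorial) := by rw [pow_succ]; ring
    _ = Real.exp 1 ^ (k+1) * ((k+1).factorial) := by
          rw [Nat.factorial_succ]; push_cast; ring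

lemma log_fact_ge (m : ℕ) (hm : 1 ≤ m) :
    (m:ℝ) * Real.log m - m ≤ Real.log (m.factorial) := by
  have hmR : (0:ℝ) < m := by exact_mod_cast hm
  have hpos : (0:ℝ) < (m:ℝ)^m := by positivity
  have h1 := Real.log_le_log hpos (pow_le_exp_mul_fact m)
  rw [Real.log_pow, Real.log_mul (by positivity) (by exact_mod_cast m.factorial_pos.ne'),
    Real.log_pow, Real.log_exp] at h1
  have : (m:ℝ) * 1 = m := by ring
  nlinarith [h1]

end CGaux2

namespace CGaux
variable {h r : ℕ} (pe qe : Fin h → Equiv.Perm (Fin h))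

lemma sV_lt (w : Vx h r) : sV pe w < 2*(h*h+5*h+r) := by
  cases w with
  | dat u v =>
      have h1 := fin_blk u
      have h2 : (pe u v : ℕ) < h := (pe u v).isLt
      simp only [sV]; omega
  | spL k => have h1 := fin_blk k; simp only [sV]; omega
  | spR k => have h1 := fin_blk k; simp only [sV]; omega
  | pL k => have h1 : (k:ℕ) < h := k.isLt; simp only [sV]; omega
  | pR k b => have h1 : (k:ℕ) < h := k.isLt; cases b <;> (simp only [sV, cond]; omega)
  | isl t => have h1 : (t:ℕ) < r := t.isLt; simp only [sV]; omega

lemma eV_lt (w : Vx h r) : eV qe w < 2*(h*h+5*h+r) := by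
  cases w with
  | dat u v =>
      have h1 := fin_blk v
      have h2 : (qe v u : ℕ) < h := (qe v u).isLt
      simp only [eV]; omega
  | spL k => have h1 : (k:ℕ) < h := k.isLt; simp only [eV]; omega
  | spR k => have h1 : (k:ℕ) < h := k.isLt; simp only [eV]; omega
  | pL k => have h1 : (k:ℕ) < h := k.isLt; simp only [eV]; omega
  | pR k b => have h1 : (k:ℕ) < h := k.isLt; cases b <;> (simp only [eV, cond]; omega)
  | isl t => have h1 : (t:ℕ) < r := t.isLt; simp only [eV]; omega

lemma sV_lt_eV (w : Vx h r) : sV pe w < eV qe w := by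
  cases w with
  | dat u v =>
      have h1 := fin_blk u
      have h2 : (pe u v : ℕ) < h := (pe u v).isLt
      simp only [sV, eV]; omega
  | spL k => have h1 := fin_blk k; have h2 : (k:ℕ) < h := k.isLt; simp only [sV, eV]; omega
  | spR k => have h1 := fin_blk k; have h2 : (k:ℕ) < h := k.isLt; simp only [sV, eV]; omega
  | pL k => simp only [sV, eV]; omega
  | pR k b => cases b <;> (simp only [sV, eV, cond]; omega)
  | isl t => simp only [sV, eV]; omega

noncomputable def ψ (h r : ℕ) : Vx h r ≃ Fin (h*h+5*h+r) :=
  Fintype.equivFinOfCardEq (card_vx h r)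

noncomputable def Gfin : SimpleGraph (Fin (h*h+5*h+r)) where
  Adj i j := (G pe qe).Adj ((ψ h r).symm i) ((ψ h r).symm j)
  symm := ⟨fun _ _ H => H.symm⟩
  loopless := ⟨fun _ H => (G pe qe).irrefl H⟩

noncomputable def toFin : (G pe qe (r := r)) ≃g (Gfin pe qe (r := r)) where
  toEquiv := ψ h r
  map_rel_iff' := by
    intro a b
    show (G pe qe).Adj ((ψ h r).symm (ψ h r a)) ((ψ h r).symm (ψ h r b)) ↔ _
    rw [Equiv.symm_apply_apply, Equiv.symm_apply_apply]

noncomputable def sF : Fin (h*h+5*h+r) → Fin (2*(h*h+5*h+r)) :=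
  fun i => ⟨sV pe ((ψ h r).symm i), by have := sV_lt pe ((ψ h r).symm i); omega⟩

noncomputable def eF : Fin (h*h+5*h+r) → Fin (2*(h*h+5*h+r)) :=
  fun i => ⟨eV qe ((ψ h r).symm i), by have := eV_lt qe ((ψ h r).symm i); omega⟩

lemma val_sF (i : Fin (h*h+5*h+r)) : (sF pe i : ℕ) = sV pe ((ψ h r).symm i) := rfl
lemma val_eF (i : Fin (h*h+5*h+r)) : (eF qe i : ℕ) = eV qe ((ψ h r).symm i) := rfl

theorem circle_Gfin : IsCircleGraph (Gfin pe qe (r := r)) := by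
  refine ⟨sF pe, eF qe, fun w => ?_, ?_, ?_⟩
  · show (sF pe w : ℕ) < (eF qe w : ℕ)
    rw [val_sF, val_eF]
    exact sV_lt_eV pe qe _
  · intro x y H
    have key : ∀ z : Fin (h*h+5*h+r) ⊕ Fin (h*h+5*h+r),
        ((Sum.elim (sF pe) (eF (r := r) qe) z : Fin (2*(h*h+5*h+r))) : ℕ)
        = Sum.elim (sV pe) (eV qe) (Sum.map (ψ h r).symm (ψ h r).symm z) := by
      rintro (z | z) <;> rfl
    have H2 : Sum.elim (sV pe) (eV qe) (Sum.map (ψ h r).symm (ψ h r).symm x)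
        = Sum.elim (sV pe) (eV qe) (Sum.map (ψ h r).symm (ψ h r).symm y) := by
      rw [← key, ← key]; exact congrArg Fin.val H
    have H3 := elim_inj pe qe H2
    have hinj : Function.Injective (Sum.map (ψ h r).symm (ψ h r).symm) :=
      Function.Injective.sumMap (ψ h r).symm.injective (ψ h r).symm.injective
    exact hinj H3
  · intro u v huv
    have hne : (ψ h r).symm u ≠ (ψ h r).symm v := fun He => huv ((ψ h r).symm.injective He)
    show (G pe qe).Adj ((ψ h r).symm u) ((ψ h r).symm v) ↔ _
    rw [adj_iff]
    simp only [Fin.lt_def, val_sF, val_eF, ovl]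
    exact and_iff_right hne

theorem count_ge (h r : ℕ) (hh : 3 ≤ h) :
    (Nat.factorial h)^(2*h) ≤ numIsoClasses (h*h+5*h+r) IsCircleGraph := by
  classical
  haveI : Finite (Quotient (graphIsoSetoid (h*h+5*h+r) IsCircleGraph)) :=
    Quotient.finite _
  set F : ((Fin h → Equiv.Perm (Fin h)) × (Fin h → Equiv.Perm (Fin h))) →
      Quotient (graphIsoSetoid (h*h+5*h+r) IsCircleGraph) :=
    fun pq => Quotient.mk _ ⟨Gfin pq.1 pq.2, circle_Gfin pq.1 pq.2⟩ with hF
  have hinj : Function.Injective F := by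
    rintro ⟨pe, qe⟩ ⟨pe', qe'⟩ H
    obtain ⟨χ⟩ := Quotient.exact H
    have φ : (G pe qe (r := r)) ≃g (G pe' qe' (r := r)) :=
      ((toFin pe qe).trans χ).trans (toFin pe' qe').symm
    obtain ⟨h1, h2⟩ := param_inj hh φ
    simp only [Prod.mk.injEq]
    exact ⟨h1, h2⟩
  have hle := Nat.card_le_card_of_injective F hinj
  have hcard : Nat.card ((Fin h → Equiv.Perm (Fin h)) × (Fin h → Equiv.Perm (Fin h)))
      = (Nat.factorial h)^(2*h) := by
    rw [Nat.card_prod, Nat.card_pi]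
    simp only [Nat.card_eq_fintype_card, Fintype.card_perm, Fintype.card_fin,
      Finset.prod_const, Finset.card_univ]
    rw [two_mul, pow_add]
  rw [← hcard]
  exact hle

end CGaux

set_option maxHeartbeats 2000000 in
set_option maxRecDepth 100000 in
/-- There is a constant `c > 0` such that for all sufficiently large `n`, the number `C_n` of
isomorphism classes of circle graphs on `n` vertices satisfies `log₂ C_n ≥ n log₂ n − c n`. -/
theorem stmt1 :
    ∃ c : ℝ, 0 < c ∧ ∃ n₀ : ℕ, ∀ n : ℕ, n₀ ≤ n →
      Real.logb 2 (numIsoClasses n IsCircleGraph) ≥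
        (n : ℝ) * Real.logb 2 n - c * n := by
  refine ⟨28, by norm_num, 1000, fun n hn => ?_⟩
  -- integer setup
  set s := Nat.sqrt n with hs
  have hss : s*s ≤ n := by
    have := Nat.sqrt_le' n; rwa [pow_two] at this
  have hlt : n < (s+1)*(s+1) := Nat.lt_succ_sqrt n
  have hs31 : 31 ≤ s := by
    rw [hs, Nat.le_sqrt]
    omega
  obtain ⟨t, ht⟩ : ∃ t, s = t + 31 := ⟨s - 31, by omega⟩
  set h := s - 3 with hhd
  have hht : h = t + 28 := by omega
  have e1 : (t+28)*(t+28) = t*t + 56*t + 784 := by ring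
  have e2 : (t+31)*(t+31) = t*t + 62*t + 961 := by ring
  have e3 : (t+32)*(t+32) = t*t + 64*t + 1024 := by ring
  have hhh : h*h = t*t + 56*t + 784 := by rw [hht, e1]
  have hss' : t*t + 62*t + 961 ≤ n := by rw [ht, e2] at hss; exact hss
  have hlt' : n < t*t + 64*t + 1024 := by rw [ht] at hlt; rw [e3] at hlt; exact hlt
  have hsum : h*h + 5*h ≤ n := by rw [hhh, hht]; omega
  set r := n - (h*h + 5*h) with hr
  have hn' : h*h + 5*h + r = n := by omega
  have hh3 : 3 ≤ h := by omega
  -- counting bound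
  have hcount : (Nat.factorial h)^(2*h) ≤ numIsoClasses n IsCircleGraph := by
    rw [← hn']; exact CGaux.count_ge h r hh3
  -- numeric facts
  have hn2 : n < 2*(h*h) := by rw [hhh]; omega
  have hn3 : n ≤ h*h + 8*s := by
    have : r ≤ 3*s + 6 := by omega
    omega
  -- real versions
  set C := numIsoClasses n IsCircleGraph with hC
  have hCpos : 1 ≤ C := le_trans (Nat.one_le_iff_ne_zero.mpr (by positivity)) hcount
  have hHpos : (28:ℝ) ≤ (h:ℝ) := by exact_mod_cast (by omega : 28 ≤ h)
  have hNpos : (1000:ℝ) ≤ (n:ℝ) := by exact_mod_cast hn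
  have rc1 : (s:ℝ)*(s:ℝ) ≤ (n:ℝ) := by exact_mod_cast hss
  have rc2 : (n:ℝ) < 2*((h:ℝ)*(h:ℝ)) := by exact_mod_cast hn2
  have rc3 : (n:ℝ) ≤ (h:ℝ)*(h:ℝ) + 8*(s:ℝ) := by exact_mod_cast hn3
  have rc4 : (h:ℝ)*(h:ℝ) + 5*(h:ℝ) ≤ (n:ℝ) := by exact_mod_cast hsum
  have hSpos : (0:ℝ) < (s:ℝ) := by
    have h31 : (31:ℝ) ≤ (s:ℝ) := by exact_mod_cast hs31
    linarith
  set N := (n:ℝ) with hN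
  set H := (h:ℝ) with hH
  set S := (s:ℝ) with hS
  -- log chain
  have hlog2 : (0:ℝ) < Real.log 2 := Real.log_pos (by norm_num)
  have hlog2' : Real.log 2 < 0.6932 := by
    have := Real.log_two_lt_d9; linarith
  have hlog2'' : (0.6931:ℝ) < Real.log 2 := by
    have := Real.log_two_gt_d9; linarith
  have hfact : H * Real.log H - H ≤ Real.log (h.factorial) :=
    CGaux2.log_fact_ge h (by omega)
  have hlogC1 : ((2*h):ℝ) * Real.log (h.factorial) ≤ Real.log C := by
    have hcast : ((Nat.factorial h ^ (2*h) : ℕ):ℝ) ≤ (C:ℝ) := by exact_mod_cast hcount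
    have hpow : ((Nat.factorial h ^ (2*h) : ℕ):ℝ) = ((h.factorial :ℝ))^(2*h) := by push_cast; ring
    have hpos : (0:ℝ) < ((h.factorial:ℝ))^(2*h) := by positivity
    have := Real.log_le_log (by rw [← hpow] at hpos; exact hpos) hcast
    rw [hpow, Real.log_pow] at this
    exact_mod_cast this
  have hfactpos : (0:ℝ) ≤ H := by linarith
  have hlogC : (H*H) * Real.log (H*H) - 2*(H*H) ≤ Real.log C := by
    have h2 : Real.log (H*H) = 2 * Real.log H := by
      rw [Real.log_mul (by linarith) (by linarith)]; ring
    have h3 : ((2*h):ℝ) * Real.log (h.factorial) = 2*H*Real.log (h.factorial) := by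
      push_cast; ring
    have h4 : 2*H*(H * Real.log H - H) ≤ 2*H*Real.log (h.factorial) := by
      apply mul_le_mul_of_nonneg_left hfact (by linarith)
    calc (H*H) * Real.log (H*H) - 2*(H*H) = 2*H*(H * Real.log H - H) := by rw [h2]; ring
    _ ≤ 2*H*Real.log (h.factorial) := h4
    _ = ((2*h):ℝ) * Real.log (h.factorial) := h3.symm
    _ ≤ Real.log C := hlogC1
  -- upper bound for N log N
  have hsqrtN : Real.sqrt N * Real.sqrt N = N := Real.mul_self_sqrt (by linarith)
  have hlogN_pos : 0 ≤ Real.log N := Real.log_nonneg (by linarith)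
  have hS_le : S ≤ Real.sqrt N := by
    rw [show S = Real.sqrt (S*S) from (Real.sqrt_mul_self hSpos.le).symm]
    exact Real.sqrt_le_sqrt rc1
  have hlogN_le : Real.log N ≤ 2 * Real.sqrt N := by
    have h1 : Real.log (Real.sqrt N) ≤ Real.sqrt N - 1 :=
      Real.log_le_sub_one_of_pos (by positivity)
    have h2 : Real.log (Real.sqrt N) = Real.log N / 2 := Real.log_sqrt (by linarith)
    rw [h2] at h1
    nlinarith [Real.sqrt_nonneg N]
  have hA2 : 8*S*Real.log N ≤ 16*N := by
    have hs0 := Real.sqrt_nonneg N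
    have h1 : 8*S*Real.log N ≤ 8*S*(2*Real.sqrt N) :=
      mul_le_mul_of_nonneg_left hlogN_le (by linarith)
    have h2 : 8*S*(2*Real.sqrt N) ≤ 8*Real.sqrt N*(2*Real.sqrt N) := by
      apply mul_le_mul_of_nonneg_right _ (by linarith)
      linarith
    have h3 : 8*Real.sqrt N*(2*Real.sqrt N) = 16*(Real.sqrt N*Real.sqrt N) := by ring
    rw [h3, hsqrtN] at h2
    linarith
  have hHHpos : (0:ℝ) < H*H := mul_pos (by linarith) (by linarith)
  have hH2N : H*H ≤ N := by linarith
  have hA3 : (H*H)*Real.log N ≤ (H*H)*Real.log (H*H) + N * Real.log 2 := by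
    have h1 : Real.log N ≤ Real.log (2*(H*H)) :=
      Real.log_le_log (by linarith) (by linarith)
    have h2 : Real.log (2*(H*H)) = Real.log 2 + Real.log (H*H) := by
      rw [Real.log_mul (by norm_num) (by linarith)]
    have h3 : (H*H)*Real.log N ≤ (H*H)*(Real.log 2 + Real.log (H*H)) :=
      mul_le_mul_of_nonneg_left (by rw [← h2]; exact h1) (by linarith)
    have h4 : (H*H)*Real.log 2 ≤ N*Real.log 2 :=
      mul_le_mul_of_nonneg_right hH2N hlog2.le
    have h5 : (H*H)*(Real.log 2 + Real.log (H*H))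
        = (H*H)*Real.log 2 + (H*H)*Real.log (H*H) := by ring
    linarith
  have hmain : N * Real.log N - 28 * Real.log 2 * N ≤ Real.log C := by
    have hA1 : N * Real.log N ≤ (H*H)*Real.log N + 8*S*Real.log N := by
      have h1 : N*Real.log N ≤ (H*H + 8*S)*Real.log N :=
        mul_le_mul_of_nonneg_right rc3 hlogN_pos
      have h2 : (H*H + 8*S)*Real.log N = (H*H)*Real.log N + 8*S*Real.log N := by ring
      linarith
    have chain : N * Real.log N ≤ Real.log C + 2*(H*H) + N*Real.log 2 + 16*N := by
      linarith
    have hNlog2 : 0.6931 * N ≤ Real.log 2 * N :=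
      mul_le_mul_of_nonneg_right hlog2''.le (by linarith)
    linarith
  -- convert to logb
  rw [ge_iff_le, Real.logb, Real.logb, le_div_iff₀ hlog2]
  have expand : ((n:ℝ) * (Real.log n / Real.log 2) - 28 * n) * Real.log 2
      = N * Real.log N - 28 * Real.log 2 * N := by
    field_simp
    ring
  rw [expand]
  exact hmain
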